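/- For integers 1 ≤ d ≤ k, C(k,d) is a core if and only if k and d are relatively prime. -/

import Mathlib

/-- Induced (restricted) arc relation on a vertex set `S`. -/
def Restrict {V : Type*} (A : V → V → Prop) (S : Set V) : V → V → Prop :=
  fun u v => u ∈ S ∧ v ∈ S ∧ A u v

/-- A digraph (arc relation) is acyclic if it has no directed cycle,
i.e. no vertex reaches itself by a nonempty directed walk. -/
def IsAcyclic {V : Type*} (A : V → V → Prop) : Prop :=
  ∀ v, ¬ Relation.TransGen A v v

/-- The subdigraph induced by `S` is acyclic. -/
def AcyclicOn {V : Type*} (A : V → V → Prop) (S : Set V) : Prop :=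
  IsAcyclic (Restrict A S)

/-- Acyclic homomorphism of digraphs. -/
def IsAcyclicHom {V W : Type*} (A : V → V → Prop) (B : W → W → Prop) (φ : V → W) : Prop :=
  (∀ w : W, AcyclicOn A (φ ⁻¹' {w})) ∧ ∀ u v, A u v → φ u = φ v ∨ B (φ u) (φ v)

/-- Automorphism of a digraph. -/
def IsDigraphAuto {W : Type*} (B : W → W → Prop) (π : W ≃ W) : Prop :=
  ∀ u v, B u v ↔ B (π u) (π v)

/-- `D` (with arcs `A`) is uniquely `C`-colourable (`C` with arcs `B`). -/
def UniquelyColourable {V W : Type*} (A : V → V → Prop) (B : W → W → Prop) : Prop :=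
  (∃ φ : V → W, IsAcyclicHom A B φ ∧ Function.Surjective φ) ∧
  ∀ φ ψ : V → W, IsAcyclicHom A B φ → IsAcyclicHom A B ψ →
    ∃ π : W ≃ W, IsDigraphAuto B π ∧ φ = ⇑π ∘ ψ

/-- Acyclic-sink set: induces an acyclic subdigraph and emits no arcs. -/
def IsAcyclicSink {V : Type*} (A : V → V → Prop) (S : Set V) : Prop :=
  AcyclicOn A S ∧ ∀ u ∈ S, ∀ v ∉ S, ¬ A u v

/-- The circular digraph `C(k,d)` on `ℤ_k`: arc `i → j` iff `(j - i) mod k ∈ {d, …, k-1}`. -/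
def CircArc (k d : ℕ) : Fin k → Fin k → Prop :=
  fun i j => d ≤ (j.val + k - i.val) % k

/-- There is a directed cycle of length `ℓ`. -/
def HasCycleOfLength {V : Type*} (A : V → V → Prop) (ℓ : ℕ) : Prop :=
  ∃ l : List V, l.length = ℓ ∧ l.Nodup ∧ List.Chain' A l ∧
    ∀ h : l ≠ [], A (l.getLast h) (l.head h)

namespace CircAux
open Finset
open Fin.NatCast Fin.CommRing
variable {n : ℕ}

lemma sub_val (a b : Fin (n+1)) : (a - b).val = (a.val + ((n+1) - b.val)) % (n+1) := by
  rw [Fin.sub_def]; simp [Nat.add_comm]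

lemma val_sub_of_le {a b : Fin (n+1)} (h : b.val ≤ a.val) : (a - b).val = a.val - b.val := by
  rw [sub_val]
  have hb := b.isLt
  have ha := a.isLt
  have h1 : a.val + ((n+1) - b.val) = (n+1) + (a.val - b.val) := by omega
  rw [h1, Nat.add_mod_left, Nat.mod_eq_of_lt (by omega)]

lemma val_sub_of_lt {a b : Fin (n+1)} (h : a.val < b.val) :
    (a - b).val = (n+1) + a.val - b.val := by
  rw [sub_val]
  have hb := b.isLt
  rw [Nat.mod_eq_of_lt (by omega)]
  omega

lemma circArc_iff (d : ℕ) (i j : Fin (n+1)) :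
    CircArc (n+1) d i j ↔ d ≤ (j - i).val := by
  unfold CircArc
  rw [sub_val, Nat.add_sub_assoc (le_of_lt i.isLt)]

lemma card_val_lt (d : ℕ) (hd : d ≤ n+1) :
    (filter (fun w : Fin (n+1) => w.val < d) univ).card = d := by
  have h : (filter (fun w : Fin (n+1) => w.val < d) univ).card = (Finset.range d).card := by
    apply Finset.card_nbij' (fun w : Fin (n+1) => w.val)
        (fun m => (⟨m % (n+1), Nat.mod_lt _ (Nat.succ_pos n)⟩ : Fin (n+1)))
    · intro a ha; simp only [coe_filter, Set.mem_setOf_eq, mem_filter, mem_univ, true_and] at ha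
      simpa using ha
    · intro m hm; simp only [coe_range, Set.mem_Iio, Finset.mem_range] at hm
      simp only [coe_filter, Set.mem_setOf_eq, mem_filter, mem_univ, true_and]
      rwa [Nat.mod_eq_of_lt (lt_of_lt_of_le hm hd)]
    · intro a _
      apply Fin.ext
      exact Nat.mod_eq_of_lt a.isLt
    · intro m hm; simp only [coe_range, Set.mem_Iio, Finset.mem_range] at hm
      exact Nat.mod_eq_of_lt (lt_of_lt_of_le hm hd)
  rw [h, Finset.card_range]

lemma card_window (d : ℕ) (hd : d ≤ n+1) (x : Fin (n+1)) :
    (filter (fun v : Fin (n+1) => (v - x).val < d) univ).card = d := by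
  have h : (filter (fun v : Fin (n+1) => (v - x).val < d) univ).card
      = (filter (fun w : Fin (n+1) => w.val < d) univ).card := by
    apply Finset.card_equiv (Equiv.subRight x)
    intro v
    simp [Equiv.subRight]
  rw [h, card_val_lt d hd]

lemma card_window' (d : ℕ) (hd : d ≤ n+1) (z : Fin (n+1)) :
    (filter (fun x : Fin (n+1) => (z - x).val < d) univ).card = d := by
  have h : (filter (fun x : Fin (n+1) => (z - x).val < d) univ).card
      = (filter (fun w : Fin (n+1) => w.val < d) univ).card := by
    apply Finset.card_equiv (Equiv.subLeft z)
    intro v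
    simp [Equiv.subLeft]
  rw [h, card_val_lt d hd]

lemma not_acyclicOn_of_card (d : ℕ) (S : Finset (Fin (n+1))) (h : d < S.card) :
    ¬ AcyclicOn (CircArc (n+1) d) ↑S := by
  intro hac
  have hdk : d ≤ n+1 := by
    have h2 := Finset.card_le_univ S
    rw [Fintype.card_fin] at h2
    omega
  have hstep : ∀ x : Fin (n+1), ∃ y, x ∈ S → (y ∈ S ∧ d ≤ (y - x).val) := by
    intro x
    by_cases hx : x ∈ S
    · have hns : ¬ S ⊆ filter (fun v : Fin (n+1) => (v - x).val < d) univ := by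
        intro hsub
        have := Finset.card_le_card hsub
        rw [card_window d hdk x] at this
        omega
      obtain ⟨y, hyS, hyW⟩ := Finset.not_subset.mp hns
      refine ⟨y, fun _ => ⟨hyS, ?_⟩⟩
      simp only [mem_filter, mem_univ, true_and, not_lt] at hyW
      exact hyW
    · exact ⟨x, fun hx' => absurd hx' hx⟩
  choose f hf using hstep
  obtain ⟨x₀, hx₀⟩ := Finset.card_pos.mp (show 0 < S.card by omega)
  set seq : ℕ → Fin (n+1) := fun m => f^[m] x₀ with hseq
  have hmem : ∀ m, seq m ∈ S := by
    intro m
    induction m with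
    | zero => exact hx₀
    | succ m ih =>
        have : seq (m+1) = f (seq m) := Function.iterate_succ_apply' f m x₀
        rw [this]
        exact (hf (seq m) ih).1
  have harc : ∀ m, Restrict (CircArc (n+1) d) ↑S (seq m) (seq (m+1)) := by
    intro m
    have hs : seq (m+1) = f (seq m) := Function.iterate_succ_apply' f m x₀
    refine ⟨hmem m, hmem (m+1), ?_⟩
    rw [circArc_iff, hs]
    exact (hf (seq m) (hmem m)).2
  have hchain : ∀ i m, Relation.TransGen (Restrict (CircArc (n+1) d) ↑S) (seq i) (seq (i + m + 1)) := by
    intro i m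
    induction m with
    | zero => exact Relation.TransGen.single (harc i)
    | succ m ih =>
        have h2 := harc (i + m + 1)
        have : i + (m + 1) + 1 = (i + m + 1) + 1 := by ring
        rw [this]
        exact Relation.TransGen.tail ih h2
  have hpig : ∃ i ∈ Finset.range (n+2), ∃ j ∈ Finset.range (n+2), i ≠ j ∧ seq i = seq j := by
    apply Finset.exists_ne_map_eq_of_card_lt_of_maps_to
    · rw [Finset.card_range, Finset.card_univ, Fintype.card_fin]
      omega
    · intro a _
      exact Finset.mem_univ _
  obtain ⟨i, _, j, _, hij, heq⟩ := hpig
  rcases Nat.lt_or_ge i j with hlt | hge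
  · have hc := hchain i (j - i - 1)
    rw [show i + (j - i - 1) + 1 = j by omega, ← heq] at hc
    exact hac (seq i) hc
  · have hlt : j < i := by omega
    have hc := hchain j (i - j - 1)
    rw [show j + (i - j - 1) + 1 = i by omega, heq] at hc
    exact hac (seq j) hc

lemma window_preimage_acyclic (d : ℕ) {φ : Fin (n+1) → Fin (n+1)}
    (hφ : IsAcyclicHom (CircArc (n+1) d) (CircArc (n+1) d) φ) (x : Fin (n+1)) :
    AcyclicOn (CircArc (n+1) d) {v | (φ v - x).val < d} := by
  set A := CircArc (n+1) d with hA
  set S : Set (Fin (n+1)) := {v | (φ v - x).val < d} with hS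
  have key : ∀ u v, Restrict A S u v → (φ v - x).val < (φ u - x).val ∨ φ u = φ v := by
    rintro u v ⟨hu, hv, harc⟩
    rcases hφ.2 u v harc with he | hB
    · exact Or.inr he
    · left
      by_contra hle
      push_neg at hle
      have harc' : d ≤ (φ v - φ u).val := (circArc_iff d _ _).mp hB
      have hd1 : φ v - φ u = (φ v - x) - (φ u - x) := (sub_sub_sub_cancel_right _ _ _).symm
      rw [hd1, val_sub_of_le hle] at harc'
      have hvS : (φ v - x).val < d := hv
      omega
  have main : ∀ u v, Relation.TransGen (Restrict A S) u v →
      (φ v - x).val < (φ u - x).val ∨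
        (φ u = φ v ∧ Relation.TransGen (Restrict A (φ ⁻¹' {φ v})) u v) := by
    intro u v h
    induction h with
    | single h' =>
        rcases key _ _ h' with hlt | he
        · exact Or.inl hlt
        · exact Or.inr ⟨he, Relation.TransGen.single ⟨by simp [he], by simp, h'.2.2⟩⟩
    | @tail b c hs h' ih =>
        rcases ih with hlt | ⟨heq, ht⟩
        · rcases key _ _ h' with hlt2 | he2
          · exact Or.inl (lt_trans hlt2 hlt)
          · left; rw [← he2]; exact hlt
        · rcases key _ _ h' with hlt2 | he2
          · left; rw [heq]; exact hlt2
          · right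
            constructor
            · rw [heq, he2]
            · have hsets : φ ⁻¹' {φ b} = φ ⁻¹' {φ c} := by rw [he2]
              rw [hsets] at ht
              exact Relation.TransGen.tail ht ⟨by simp [he2], by simp, h'.2.2⟩
  intro v hv
  rcases main v v hv with hlt | ⟨_, ht⟩
  · exact lt_irrefl _ hlt
  · exact hφ.1 (φ v) v ht

lemma injective_of_hom (d : ℕ) (hd1 : 1 ≤ d) (hdk : d < n+1)
    (hcop : Nat.Coprime (n+1) d) {φ : Fin (n+1) → Fin (n+1)}
    (hφ : IsAcyclicHom (CircArc (n+1) d) (CircArc (n+1) d) φ) :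
    Function.Injective φ := by
  have hdk' : d ≤ n+1 := le_of_lt hdk
  set Tc : Fin (n+1) → ℕ := fun x => (filter (fun v => (φ v - x).val < d) univ).card with hTc
  have hT_le : ∀ x, Tc x ≤ d := by
    intro x
    by_contra hcon
    push_neg at hcon
    apply not_acyclicOn_of_card d _ hcon
    have hsets : (↑(filter (fun v => (φ v - x).val < d) univ) : Set (Fin (n+1)))
        = {v | (φ v - x).val < d} := by
      ext v; simp
    rw [hsets]
    exact window_preimage_acyclic d hφ x
  have hsum : ∑ x, Tc x = (n+1) * d := by
    have h1 : ∀ x : Fin (n+1), Tc x = ∑ v : Fin (n+1), if (φ v - x).val < d then 1 else 0 := by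
      intro x
      rw [hTc]
      exact Finset.card_filter _ _
    calc ∑ x, Tc x = ∑ x : Fin (n+1), ∑ v : Fin (n+1), if (φ v - x).val < d then 1 else 0 := by
          exact Finset.sum_congr rfl (fun x _ => h1 x)
      _ = ∑ v : Fin (n+1), ∑ x : Fin (n+1), if (φ v - x).val < d then 1 else 0 :=
          Finset.sum_comm
      _ = ∑ v : Fin (n+1), d := by
          apply Finset.sum_congr rfl
          intro v _
          rw [← Finset.card_filter]
          exact card_window' d hdk' (φ v)
      _ = (n+1) * d := by
          rw [Finset.sum_const, Finset.card_univ, Fintype.card_fin, smul_eq_mul]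
  have hT : ∀ x, Tc x = d := by
    by_contra hcon
    push_neg at hcon
    obtain ⟨x₀, hx₀⟩ := hcon
    have hlt := Finset.sum_lt_sum (fun i (_ : i ∈ univ) => hT_le i)
      ⟨x₀, Finset.mem_univ x₀, lt_of_le_of_ne (hT_le x₀) hx₀⟩
    rw [hsum, Finset.sum_const, Finset.card_univ, Fintype.card_fin, smul_eq_mul] at hlt
    omega
  set N : Fin (n+1) → ℕ := fun x => (filter (fun v => φ v = x) univ).card with hN
  set dF : Fin (n+1) := ⟨d, hdk⟩ with hdF
  set oneF : Fin (n+1) := ⟨1, by omega⟩ with honeF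
  have hsub_one : ∀ w : Fin (n+1), (w - oneF).val = if w.val = 0 then n else w.val - 1 := by
    intro w
    by_cases h0 : w.val = 0
    · have ho : oneF.val = 1 := rfl
      rw [if_pos h0, val_sub_of_lt (by rw [h0]; exact Nat.zero_lt_one), h0, ho]
      omega
    · have ho : oneF.val = 1 := rfl
      rw [if_neg h0, val_sub_of_le (by rw [ho]; omega), ho]
  have hstep : ∀ x : Fin (n+1), N x = N (x + dF) := by
    intro x
    set A₁ := filter (fun v => (φ v - x).val < d) univ with hA₁
    set A₂ := filter (fun v => (φ v - (x + oneF)).val < d) univ with hA₂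
    have hrel : ∀ v : Fin (n+1), φ v - (x + oneF) = (φ v - x) - oneF := by
      intro v; rw [sub_add_eq_sub_sub]
    have hA1d : A₁ \ A₂ = filter (fun v => φ v = x) univ := by
      ext v
      simp only [hA₁, hA₂, Finset.mem_sdiff, mem_filter, mem_univ, true_and, not_lt]
      rw [hrel v, hsub_one]
      constructor
      · rintro ⟨h1, h2⟩
        have h0 : (φ v - x).val = 0 := by
          by_cases hz : (φ v - x).val = 0
          · exact hz
          · rw [if_neg hz] at h2; omega
        have : φ v - x = 0 := Fin.ext h0
        have := sub_eq_zero.mp this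
        exact this
      · intro hvx
        have h0 : (φ v - x).val = 0 := by rw [hvx, sub_self]; rfl
        rw [h0, if_pos rfl]
        omega
    have hA2d : A₂ \ A₁ = filter (fun v => φ v = x + dF) univ := by
      ext v
      simp only [hA₁, hA₂, Finset.mem_sdiff, mem_filter, mem_univ, true_and, not_lt]
      rw [hrel v, hsub_one]
      constructor
      · rintro ⟨h1, h2⟩
        have hz : ¬ (φ v - x).val = 0 := by
          intro hz; rw [if_pos hz] at h1; omega
        rw [if_neg hz] at h1
        have hvd : (φ v - x).val = d := by omega
        have : φ v - x = dF := Fin.ext hvd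
        rw [sub_eq_iff_eq_add] at this
        exact this.trans (add_comm dF x)
      · intro hvx
        have h3 : x + dF - x = dF := by
          rw [add_comm x dF]
          exact add_sub_cancel_right dF x
        have hvd : (φ v - x).val = d := by rw [hvx, h3]
        rw [hvd]
        have hz : ¬ d = 0 := by omega
        rw [if_neg hz]
        omega
    have hc1 : A₁.card = d := hT x
    have hc2 : A₂.card = d := hT (x + oneF)
    have hi1 := Finset.card_inter_add_card_sdiff A₁ A₂
    have hi2 := Finset.card_inter_add_card_sdiff A₂ A₁
    rw [Finset.inter_comm A₂ A₁] at hi2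
    have : (A₁ \ A₂).card = (A₂ \ A₁).card := by omega
    rw [hA1d, hA2d] at this
    exact this
  have hiter : ∀ (m : ℕ) (x : Fin (n+1)), N x = N (x + m • dF) := by
    intro m
    induction m with
    | zero => intro x; simp
    | succ m ih =>
        intro x
        calc N x = N (x + m • dF) := ih x
          _ = N ((x + m • dF) + dF) := hstep _
          _ = N (x + (m+1) • dF) := by rw [succ_nsmul, add_assoc]
  have hgen : ∀ z : Fin (n+1), ∃ m : ℕ, m • dF = z := by
    intro z
    obtain ⟨mi, -, hmi⟩ := Nat.exists_mul_mod_eq_one_of_coprime hcop.symm (by omega)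
    refine ⟨z.val * mi, ?_⟩
    apply Fin.ext
    have hv : (z.val * mi) • dF = ((z.val * mi : ℕ) : Fin (n+1)) * dF := nsmul_eq_mul _ _
    rw [hv]
    rw [Fin.val_mul]
    rw [Fin.val_natCast]
    have hdFv : dF.val = d := rfl
    rw [hdFv]
    rw [Nat.mod_mul_mod]
    have h2 : z.val * mi * d = z.val * (d * mi) := by ring
    rw [h2, Nat.mul_mod, hmi]
    have hz := z.isLt
    rw [Nat.mod_eq_of_lt hz, mul_one, Nat.mod_eq_of_lt hz]
  have hall : ∀ x y : Fin (n+1), N x = N y := by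
    intro x y
    obtain ⟨m, hm⟩ := hgen (y - x)
    have := hiter m x
    rw [hm] at this
    rw [add_comm x (y - x), sub_add_cancel] at this
    exact this
  have htot : ∑ x, N x = n + 1 := by
    have h := Finset.card_eq_sum_card_fiberwise
      (f := φ) (s := (univ : Finset (Fin (n+1)))) (t := univ) (fun x _ => Finset.mem_univ _)
    rw [Finset.card_univ, Fintype.card_fin] at h
    exact h.symm
  have hone : ∀ x, N x = 1 := by
    intro x
    have hconst : ∑ y : Fin (n+1), N y = (n+1) * N x := by
      calc ∑ y : Fin (n+1), N y = ∑ _y : Fin (n+1), N x :=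
            Finset.sum_congr rfl (fun y _ => hall y x)
        _ = (n+1) * N x := by
            rw [Finset.sum_const, Finset.card_univ, Fintype.card_fin, smul_eq_mul]
    rw [htot] at hconst
    have hpos : 0 < n + 1 := Nat.succ_pos n
    nlinarith [hconst]
  intro a b hab
  have h1 := hone (φ b)
  rw [hN] at h1
  apply Finset.card_le_one.mp (le_of_eq h1) a ?_ b ?_
  · exact Finset.mem_filter.mpr ⟨Finset.mem_univ _, hab⟩
  · exact Finset.mem_filter.mpr ⟨Finset.mem_univ _, rfl⟩

lemma decreasing_transGen {R : Fin (n+1) → Fin (n+1) → Prop}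
    (hdec : ∀ u v, R u v → v.val < u.val) :
    ∀ a b, Relation.TransGen R a b → b.val < a.val := by
  intro a b h
  induction h with
  | single h' => exact hdec _ _ h'
  | tail _ h' ih => exact lt_trans (hdec _ _ h') ih

lemma not_coprime_hom (d : ℕ) (hd1 : 1 ≤ d) (hdk : d ≤ n+1)
    (hnc : ¬ Nat.Coprime (n+1) d) :
    ∃ φ : Fin (n+1) → Fin (n+1),
      IsAcyclicHom (CircArc (n+1) d) (CircArc (n+1) d) φ ∧ ¬ Function.Bijective φ := by
  obtain ⟨g, hg⟩ : ∃ g, g = Nat.gcd (n+1) d := ⟨_, rfl⟩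
  have hgk : g ∣ (n+1) := hg ▸ Nat.gcd_dvd_left _ _
  have hgd : g ∣ d := hg ▸ Nat.gcd_dvd_right _ _
  have hg1 : g ≠ 1 := by rw [hg]; exact hnc
  have hg0 : 0 < g := hg ▸ Nat.gcd_pos_of_pos_left _ (Nat.succ_pos n)
  have hg2 : 2 ≤ g := by omega
  have hgled : g ≤ d := Nat.le_of_dvd (by omega) hgd
  set φ : Fin (n+1) → Fin (n+1) := fun i =>
    ⟨g * (i.val / g), lt_of_le_of_lt (Nat.mul_div_le i.val g) i.isLt⟩ with hφdef
  refine ⟨φ, ⟨?_, ?_⟩, ?_⟩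
  · -- fibers acyclic
    intro w v hv
    have hdec : ∀ u u' : Fin (n+1), Restrict (CircArc (n+1) d) (φ ⁻¹' {w}) u u' → u'.val < u.val := by
      rintro u u' ⟨hu, hu', hA⟩
      have hq : g * (u.val / g) = g * (u'.val / g) := by
        have h1 : φ u = w := hu
        have h2 : φ u' = w := hu'
        exact congrArg Fin.val (h1.trans h2.symm)
      by_contra hcon
      push_neg at hcon
      have hdm_u := Nat.div_add_mod u.val g
      have hdm_v := Nat.div_add_mod u'.val g
      have hmu : u.val % g < g := Nat.mod_lt _ hg0
      have hmv : u'.val % g < g := Nat.mod_lt _ hg0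
      have h5 : (u'.val + (n+1) - u.val) % (n+1) = u'.val - u.val := by
        have e1 : u'.val + (n+1) - u.val = (n+1) + (u'.val - u.val) := by omega
        have e2 : u'.val - u.val < n+1 := by omega
        rw [e1, Nat.add_mod_left, Nat.mod_eq_of_lt e2]
      have hA' : d ≤ (u'.val + (n+1) - u.val) % (n+1) := hA
      rw [h5] at hA'
      omega
    exact lt_irrefl _ (decreasing_transGen hdec v v hv)
  · -- arc condition
    intro u v hA
    have hA' : d ≤ (v.val + (n+1) - u.val) % (n+1) := hA
    obtain ⟨qa, ra, hdm_a, hra_lt, hφu⟩ :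
        ∃ q r, g * q + r = u.val ∧ r < g ∧ (φ u).val = g * q :=
      ⟨u.val / g, u.val % g, Nat.div_add_mod _ _, Nat.mod_lt _ hg0, rfl⟩
    obtain ⟨qb, rb, hdm_b, hrb_lt, hφv⟩ :
        ∃ q r, g * q + r = v.val ∧ r < g ∧ (φ v).val = g * q :=
      ⟨v.val / g, v.val % g, Nat.div_add_mod _ _, Nat.mod_lt _ hg0, rfl⟩
    obtain ⟨K, hK⟩ : ∃ K, n + 1 = g * K := ⟨(n+1)/g, (Nat.mul_div_cancel' hgk).symm⟩
    obtain ⟨D, hD⟩ : ∃ D, d = g * D := ⟨d/g, (Nat.mul_div_cancel' hgd).symm⟩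
    have hD1 : 1 ≤ D := by
      rcases Nat.eq_zero_or_pos D with h0 | h1
      · rw [h0, Nat.mul_zero] at hD; omega
      · exact h1
    have hKpos : 0 < K := by
      rcases Nat.eq_zero_or_pos K with h0 | h1
      · rw [h0, Nat.mul_zero] at hK; omega
      · exact h1
    have hqaK : qa < K := by
      have h1 : g * qa < g * K := by
        have := u.isLt
        omega
      exact Nat.lt_of_mul_lt_mul_left h1
    have hqbK : qb < K := by
      have h1 : g * qb < g * K := by
        have := v.isLt
        omega
      exact Nat.lt_of_mul_lt_mul_left h1
    obtain ⟨X, hX⟩ : ∃ X, X = qb + K - qa := ⟨_, rfl⟩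
    obtain ⟨s, hsdef⟩ : ∃ s', s' = X % K := ⟨_, rfl⟩
    have hsK : s < K := by rw [hsdef]; exact Nat.mod_lt _ hKpos
    have hXpos : 1 ≤ X := by omega
    have hX2K : X < 2 * K := by omega
    have hXs : X = s ∨ X = s + K := by
      rcases Nat.lt_or_ge X K with hlt | hge
      · left; rw [hsdef, Nat.mod_eq_of_lt hlt]
      · right
        have h2 : X - K < K := by omega
        have e1 : X % K = (X - K) % K := by
          conv_lhs => rw [show X = (X - K) + K by omega]
          rw [Nat.add_mod_right]
        rw [hsdef, e1, Nat.mod_eq_of_lt h2]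
        omega
    have hTval : ((φ v).val + (n+1) - (φ u).val) % (n+1) = g * s := by
      have e2 : g * X + g * qa = g * qb + g * K := by
        rw [← Nat.mul_add, show X + qa = qb + K by omega, Nat.mul_add]
      have e1 : (φ v).val + (n+1) - (φ u).val = g * X := by
        rw [hφu, hφv, hK]
        omega
      rw [e1, hK, Nat.mul_mod_mul_left, hsdef]
    by_cases hs0 : s = 0
    · left
      have hXK : X = K := by rcases hXs with h | h <;> omega
      have hqq : qa = qb := by omega
      apply Fin.ext
      rw [hφu, hφv, hqq]
    · by_cases hsD : D ≤ s
      · right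
        show d ≤ ((φ v).val + (n+1) - (φ u).val) % (n+1)
        rw [hTval, hD]
        exact Nat.mul_le_mul_left g hsD
      · exfalso
        push_neg at hsD
        have ht_lt : (v.val + (n+1) - u.val) % (n+1) < n + 1 := Nat.mod_lt _ (Nat.succ_pos n)
        obtain ⟨t, htdef⟩ : ∃ t, t = (v.val + (n+1) - u.val) % (n+1) := ⟨_, rfl⟩
        have hAt : d ≤ t := by rw [htdef]; exact hA'
        have htlt : t < n + 1 := by rw [htdef]; exact ht_lt
        have hale : u.val ≤ v.val + (n+1) := by omega
        -- integer facts
        have haz : (u.val : ℤ) = (g : ℤ) * qa + ra := by exact_mod_cast hdm_a.symm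
        have hbz : (v.val : ℤ) = (g : ℤ) * qb + rb := by exact_mod_cast hdm_b.symm
        have hKz : (n : ℤ) + 1 = (g : ℤ) * K := by exact_mod_cast hK
        have hDz : (d : ℤ) = (g : ℤ) * D := by exact_mod_cast hD
        obtain ⟨E, hE⟩ : ∃ E : ℤ, E = (g : ℤ) * s + rb - ra := ⟨_, rfl⟩
        have hdvd : ((n : ℤ) + 1) ∣ ((v.val : ℤ) + ((n : ℤ) + 1) - (u.val : ℤ) - E) := by
          rcases hXs with hc | hc
          · have hXz : (qb : ℤ) + K - qa = s := by
              have h1 : (X : ℤ) = (qb : ℤ) + K - qa := by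
                rw [hX, Nat.cast_sub (by omega)]
                push_cast
                ring
              have h2 : (X : ℤ) = s := by exact_mod_cast congrArg (Nat.cast (R := ℤ)) hc
              linarith
            refine ⟨0, ?_⟩
            linear_combination hbz - haz + (g : ℤ) * hXz + hKz - hE
          · have hXz : (qb : ℤ) + K - qa = (s : ℤ) + K := by
              have h1 : (X : ℤ) = (qb : ℤ) + K - qa := by
                rw [hX, Nat.cast_sub (by omega)]
                push_cast
                ring
              have h2 : (X : ℤ) = (s : ℤ) + K := by exact_mod_cast congrArg (Nat.cast (R := ℤ)) hc
              linarith
            refine ⟨1, ?_⟩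
            linear_combination hbz - haz + (g : ℤ) * hXz - hE
        have hgz0 : (0 : ℤ) < (g : ℤ) := by exact_mod_cast hg0
        have hge : (g : ℤ) ≤ (g : ℤ) * s := by
          have h1 : (1 : ℤ) ≤ (s : ℤ) := by
            have : 1 ≤ s := Nat.one_le_iff_ne_zero.mpr hs0
            exact_mod_cast this
          exact le_mul_of_one_le_right (le_of_lt hgz0) h1
        have hgsle : (g : ℤ) * s ≤ (g : ℤ) * D - g := by
          have h1 : (s : ℤ) + 1 ≤ (D : ℤ) := by exact_mod_cast hsD
          have h2 : (g : ℤ) * ((s : ℤ) + 1) ≤ (g : ℤ) * D :=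
            mul_le_mul_of_nonneg_left h1 (le_of_lt hgz0)
          have h3 : (g : ℤ) * ((s : ℤ) + 1) = (g : ℤ) * s + g := by ring
          linarith
        have hraz : (ra : ℤ) < g := by exact_mod_cast hra_lt
        have hrbz : (rb : ℤ) < g := by exact_mod_cast hrb_lt
        have hra0 : (0 : ℤ) ≤ ra := Int.ofNat_nonneg ra
        have hrb0 : (0 : ℤ) ≤ rb := Int.ofNat_nonneg rb
        have hE1 : 1 ≤ E := by omega
        have hEd : E ≤ (d : ℤ) - 1 := by omega
        have hmod : (t : ℤ) = E := by
          have htz : (t : ℤ) = ((v.val : ℤ) + ((n : ℤ) + 1) - u.val) % ((n : ℤ) + 1) := by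
            rw [htdef]
            rw [Int.natCast_mod, Nat.cast_sub hale]
            push_cast
            ring_nf
          have h1 : ((v.val : ℤ) + ((n : ℤ) + 1) - u.val) % ((n : ℤ) + 1)
              = E % ((n : ℤ) + 1) := by
            apply Int.ModEq.symm
            rw [Int.modEq_iff_dvd]
            exact hdvd
          have hdz : (d : ℤ) ≤ (n : ℤ) + 1 := by exact_mod_cast hdk
          have h2 : E % ((n : ℤ) + 1) = E := Int.emod_eq_of_lt (by omega) (by omega)
          rw [htz, h1, h2]
        have hAtz : (d : ℤ) ≤ (t : ℤ) := by exact_mod_cast hAt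
        omega
  · -- not bijective
    intro hbij
    have hn2 : 2 ≤ n + 1 := le_trans (le_trans hg2 hgled) hdk
    have h01 : φ ⟨0, by omega⟩ = φ ⟨1, by omega⟩ := by
      apply Fin.ext
      show g * (0 / g) = g * (1 / g)
      rw [Nat.zero_div, Nat.div_eq_of_lt hg2]
    have h2 := hbij.1 h01
    have h3 : (0 : ℕ) = 1 := congrArg Fin.val h2
    omega

end CircAux
theorem circ_core_iff_coprime (k d : ℕ) (hd : 1 ≤ d) (hk : d ≤ k) :
    (∀ φ : Fin k → Fin k, IsAcyclicHom (CircArc k d) (CircArc k d) φ →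
        Function.Bijective φ) ↔ Nat.Coprime k d := by
  obtain ⟨n, rfl⟩ : ∃ n, k = n + 1 := ⟨k - 1, by omega⟩
  constructor
  · intro hcore
    by_contra hnc
    obtain ⟨φ, hhom, hnb⟩ := CircAux.not_coprime_hom d hd hk hnc
    exact hnb (hcore φ hhom)
  · intro hcop φ hφ
    rcases Nat.eq_zero_or_pos n with hn0 | hn1
    · subst hn0
      have hsub : ∀ a b : Fin (0+1), a = b := by
        intro a b
        apply Fin.ext
        have := a.isLt
        have := b.isLt
        omega
      exact ⟨fun a b _ => hsub a b, fun y => ⟨y, hsub _ _⟩⟩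
    · have hdk : d < n + 1 := by
        rcases Nat.lt_or_ge d (n+1) with h | h
        · exact h
        · exfalso
          have hde : d = n + 1 := by omega
          rw [hde] at hcop
          have h1 : Nat.gcd (n+1) (n+1) = n+1 := Nat.gcd_self _
          have h2 : Nat.gcd (n+1) (n+1) = 1 := hcop
          omega
      exact Finite.injective_iff_bijective.mp (CircAux.injective_of_hom d hd hdk hcop hφ)
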